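/- Let ρ be a density matrix on ℂ^d with orthonormal eigendecomposition ρ = Σ_i λ_i |λ_i⟩⟨λ_i|, all λ_i strictly positive, let {|b_j⟩} be an orthonormal basis of ℂ^d, and let ρ̃ = Σ_j η_j |b_j⟩⟨b_j| be the effective density matrix of ρ with respect to {|b_j⟩}, with all η_j strictly positive. Then S(ρ) ≤ S(ρ̃): the von Neumann entropy of the effective density matrix is at least that of the original density matrix. -/

import Mathlib

open scoped BigOperators

noncomputable section

/-- The inner product ⟨v|w⟩ on ℂ^d (antilinear in the first slot). -/
def braket {d : ℕ} (v w : Fin d → ℂ) : ℂ := ∑ k, (starRingEnd ℂ) (v k) * w k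

/-- The rank-one outer product |v⟩⟨v| as a d×d complex matrix. -/
def ketbra {d : ℕ} (v : Fin d → ℂ) : Matrix (Fin d) (Fin d) ℂ :=
  fun i j => v i * (starRingEnd ℂ) (v j)

/-- A family of d vectors in ℂ^d is an orthonormal basis. -/
def IsONB {d : ℕ} (V : Fin d → Fin d → ℂ) : Prop :=
  ∀ i j, braket (V i) (V j) = if i = j then 1 else 0

lemma braket_conj_symm {d : ℕ} (v w : Fin d → ℂ) :
    braket v w = (starRingEnd ℂ) (braket w v) := by
  simp only [braket, map_sum, map_mul, RingHomCompTriple.comp_apply,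
    Complex.conj_conj]
  exact Finset.sum_congr rfl fun k _ => by ring_nf; simp [mul_comm]

lemma col_orth {d : ℕ} {V : Fin d → Fin d → ℂ} (hV : IsONB V) (k l : Fin d) :
    ∑ i, V i k * (starRingEnd ℂ) (V i l) = if k = l then 1 else 0 := by
  let A : Matrix (Fin d) (Fin d) ℂ := Matrix.of V
  have hA : A * A.conjTranspose = 1 := by
    ext i j
    have h := hV j i
    simp only [braket] at h
    simp only [Matrix.mul_apply, Matrix.conjTranspose_apply, Matrix.of_apply,
      Matrix.one_apply, A]
    calc ∑ k, V i k * (starRingEnd ℂ) (V j k)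
        = ∑ k, (starRingEnd ℂ) (V j k) * V i k := by
          exact Finset.sum_congr rfl fun k _ => mul_comm _ _
      _ = if i = j then 1 else 0 := by rw [h]; by_cases hij : i = j <;> simp [hij, eq_comm]
  have hA' : A.conjTranspose * A = 1 := mul_eq_one_comm.mp hA
  have h2 : ∑ i, (starRingEnd ℂ) (V i k) * V i l = if k = l then 1 else 0 := by
    have := congrFun (congrFun hA' k) l
    simpa [Matrix.mul_apply, Matrix.conjTranspose_apply, Matrix.one_apply, A] using this
  have := congrArg (starRingEnd ℂ) h2
  simpa [map_sum, map_mul, Complex.conj_conj, mul_comm, apply_ite] using this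

lemma parseval {d : ℕ} {V : Fin d → Fin d → ℂ} (hV : IsONB V) (w : Fin d → ℂ) :
    ∑ i, (Complex.normSq (braket (V i) w) : ℂ) = braket w w := by
  have expand : ∀ i, (Complex.normSq (braket (V i) w) : ℂ)
      = ∑ k, ∑ l, ((starRingEnd ℂ) (w k) * w l) * (V i k * (starRingEnd ℂ) (V i l)) := by
    intro i
    rw [Complex.normSq_eq_conj_mul_self]
    simp only [braket, map_sum, map_mul, Complex.conj_conj]
    rw [Finset.sum_mul_sum]
    exact Finset.sum_congr rfl fun k _ => Finset.sum_congr rfl fun l _ => by ring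
  calc ∑ i, (Complex.normSq (braket (V i) w) : ℂ)
      = ∑ i, ∑ k, ∑ l, ((starRingEnd ℂ) (w k) * w l) * (V i k * (starRingEnd ℂ) (V i l)) :=
        Finset.sum_congr rfl fun i _ => expand i
    _ = ∑ k, ∑ l, ((starRingEnd ℂ) (w k) * w l) *
          (∑ i, V i k * (starRingEnd ℂ) (V i l)) := by
        rw [Finset.sum_comm]
        exact Finset.sum_congr rfl fun k _ => by
          rw [Finset.sum_comm]
          exact Finset.sum_congr rfl fun l _ => by rw [Finset.mul_sum]
    _ = braket w w := by
        simp only [col_orth hV]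
        simp [braket, Finset.sum_ite_eq, mul_comm]

/-- `S(ρ) ≤ S(ρ̃)`: the von Neumann entropy of the effective
density matrix is at least that of the original density matrix. -/
theorem entropy_le_effective_entropy {d : ℕ}
    (ρ : Matrix (Fin d) (Fin d) ℂ)
    (lam : Fin d → ℝ) (V B : Fin d → Fin d → ℂ)
    (hV : IsONB V) (hB : IsONB B)
    (hlam_pos : ∀ i, 0 < lam i) (hlam_sum : ∑ i, lam i = 1)
    (hρ : ρ = ∑ i, (lam i : ℂ) • ketbra (V i))
    (P : Fin d → Fin d → ℝ)
    (hP : ∀ i j, P i j = Complex.normSq (braket (V i) (B j)))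
    (η : Fin d → ℝ) (hη : ∀ j, η j = ∑ i, P i j * lam i)
    (hη_pos : ∀ j, 0 < η j)
    (ρt : Matrix (Fin d) (Fin d) ℂ)
    (hρt : ρt = ∑ j, (η j : ℂ) • ketbra (B j)) :
    -∑ i, lam i * Real.log (lam i) ≤ -∑ j, η j * Real.log (η j) := by
  have hPnn : ∀ i j, 0 ≤ P i j := fun i j => (hP i j) ▸ Complex.normSq_nonneg _
  -- column sums: ∑ i, P i j = 1
  have hcol : ∀ j, ∑ i, P i j = 1 := by
    intro j
    have h := parseval hV (B j)
    rw [hB j j] at h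
    simp only [if_pos rfl] at h
    have : ((∑ i, P i j : ℝ) : ℂ) = 1 := by
      push_cast
      simpa only [hP, ↓reduceIte] using h
    exact_mod_cast this
  -- row sums: ∑ j, P i j = 1
  have hrow : ∀ i, ∑ j, P i j = 1 := by
    intro i
    have h := parseval hB (V i)
    rw [hV i i] at h
    simp only [if_pos rfl] at h
    have hswap : ∀ j, P i j = Complex.normSq (braket (B j) (V i)) := by
      intro j
      rw [hP i j, braket_conj_symm]
      exact Complex.normSq_conj _
    have : ((∑ j, P i j : ℝ) : ℂ) = 1 := by
      push_cast
      simpa only [hswap, ↓reduceIte] using h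
    exact_mod_cast this
  set f : ℝ → ℝ := fun x => x * Real.log x with hf_def
  have hconv : ConvexOn ℝ (Set.Ici (0 : ℝ)) f := Real.convexOn_mul_log
  have jensen : ∀ j, f (η j) ≤ ∑ i, P i j * f (lam i) := by
    intro j
    have h := hconv.map_sum_le (t := Finset.univ) (w := fun i => P i j) (p := lam)
      (fun i _ => hPnn i j) (hcol j) (fun i _ => le_of_lt (hlam_pos i))
    simpa [hη j, smul_eq_mul] using h
  have key : ∑ j, η j * Real.log (η j) ≤ ∑ i, lam i * Real.log (lam i) := by
    calc ∑ j, η j * Real.log (η j) = ∑ j, f (η j) := rfl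
      _ ≤ ∑ j, ∑ i, P i j * f (lam i) := Finset.sum_le_sum fun j _ => jensen j
      _ = ∑ i, (∑ j, P i j) * f (lam i) := by
          rw [Finset.sum_comm]
          exact Finset.sum_congr rfl fun i _ => by rw [Finset.sum_mul]
      _ = ∑ i, lam i * Real.log (lam i) := by
          exact Finset.sum_congr rfl fun i _ => by rw [hrow i, one_mul]
  linarith
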